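/- arXiv:2007.09705 — 3 statements merged into one kernel-verified Lean document; each statement's English description precedes it below -/
import Mathlib

section
/- Zooming-out identities: for all natural numbers a and b, the base-3 values of the grid entries satisfy [G(3a,2b)]_3 = 3·[G(2a,b)]_3, [G(3a,2b+1)]_3 = 3·[G(2a,b)]_3 + 1, [G(3a+1,2b)]_3 = 3·[G(2a,b)]_3 + 2, [G(3a+1,2b+1)]_3 = 3·[G(2a+1,b)]_3, [G(3a+2,2b)]_3 = 3·[G(2a+1,b)]_3 + 1, and [G(3a+2,2b+1)]_3 = 3·[G(2a+1,b)]_3 + 2. -/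
abbrev Digit := Fin 3

/-- Base-3 value of a digit string (most significant digit first). -/
def val3 (w : List Digit) : ℕ := w.foldl (fun acc d => 3 * acc + d.val) 0

/-- Helper for `addTwo`, acting on the reversed (least significant digit first) string:
replace each digit `d` by `d - 1 (mod 3)` up to and including the first digit 0;
if no digit 0 occurs, a digit 0 is first prepended at the most significant end
(and then becomes 2). -/
def addTwoAux : List Digit → List Digit
  | [] => [2]
  | d :: rest => if d = 0 then (d + 2) :: rest else (d + 2) :: addTwoAux rest

/-- Adding two in base 3/2: all digits at or to the right of the rightmost 0
(including that 0) are decreased by 1 modulo 3; if there is no 0, a 0 is first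
prepended. -/
def addTwo (w : List Digit) : List Digit := (addTwoAux w.reverse).reverse

/-- Binary representation of `j` (digits 0 and 1, most significant first, no leading
zeros), with `binRep 0 = [0]`. -/
def binRep (j : ℕ) : List Digit :=
  if j = 0 then [0] else (Nat.digits 2 j).reverse.map (fun (d : ℕ) => (Fin.ofNat 3 d : Digit))

/-- The grid: row 0 consists of the binary representations in increasing order, and
each subsequent row is obtained entrywise by adding two in base 3/2. -/
def G : ℕ → ℕ → List Digit
  | 0, j => binRep j
  | i + 1, j => addTwo (G i j)

lemma addTwo_append0 (w : List Digit) : addTwo (w ++ [0]) = w ++ [2] := by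
  simp [addTwo, addTwoAux]

lemma addTwo_append1 (w : List Digit) : addTwo (w ++ [1]) = addTwo w ++ [0] := by
  simp [addTwo, addTwoAux]

lemma addTwo_append2 (w : List Digit) : addTwo (w ++ [2]) = addTwo w ++ [1] := by
  simp [addTwo, addTwoAux]

lemma val3_append (w : List Digit) (d : Digit) : val3 (w ++ [d]) = 3 * val3 w + d.val := by
  simp [val3, List.foldl_append]

lemma G_eq_iterate (i j : ℕ) : G i j = addTwo^[i] (G 0 j) := by
  induction i with
  | zero => rfl
  | succ i ih => rw [Function.iterate_succ_apply']; exact congrArg addTwo ih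

lemma iter0 (a : ℕ) (w : List Digit) :
    addTwo^[3 * a] (w ++ [0]) = addTwo^[2 * a] w ++ [0] := by
  induction a with
  | zero => simp
  | succ a ih =>
      have h3 : 3 * (a + 1) = (3 * a) + 1 + 1 + 1 := by ring
      have h2 : 2 * (a + 1) = (2 * a) + 1 + 1 := by ring
      rw [h3, h2, Function.iterate_succ_apply', Function.iterate_succ_apply',
        Function.iterate_succ_apply', ih, addTwo_append0, addTwo_append2,
        addTwo_append1, Function.iterate_succ_apply', Function.iterate_succ_apply']

lemma iter1 (a : ℕ) (w : List Digit) :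
    addTwo^[3 * a] (w ++ [1]) = addTwo^[2 * a] w ++ [1] := by
  induction a with
  | zero => simp
  | succ a ih =>
      have h3 : 3 * (a + 1) = (3 * a) + 1 + 1 + 1 := by ring
      have h2 : 2 * (a + 1) = (2 * a) + 1 + 1 := by ring
      rw [h3, h2, Function.iterate_succ_apply', Function.iterate_succ_apply',
        Function.iterate_succ_apply', ih, addTwo_append1, addTwo_append0,
        addTwo_append2, Function.iterate_succ_apply', Function.iterate_succ_apply']

lemma iter0' (a : ℕ) (w : List Digit) :
    addTwo^[3 * a + 1] (w ++ [0]) = addTwo^[2 * a] w ++ [2] := by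
  rw [Function.iterate_succ_apply', iter0, addTwo_append0]

lemma iter0'' (a : ℕ) (w : List Digit) :
    addTwo^[3 * a + 2] (w ++ [0]) = addTwo^[2 * a + 1] w ++ [1] := by
  show addTwo^[3 * a + 1 + 1] _ = _
  rw [Function.iterate_succ_apply', iter0', addTwo_append2,
    Function.iterate_succ_apply']

lemma iter1' (a : ℕ) (w : List Digit) :
    addTwo^[3 * a + 1] (w ++ [1]) = addTwo^[2 * a + 1] w ++ [0] := by
  rw [Function.iterate_succ_apply', iter1, addTwo_append1,
    Function.iterate_succ_apply']

lemma iter1'' (a : ℕ) (w : List Digit) :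
    addTwo^[3 * a + 2] (w ++ [1]) = addTwo^[2 * a + 1] w ++ [2] := by
  show addTwo^[3 * a + 1 + 1] _ = _
  rw [Function.iterate_succ_apply', iter1', addTwo_append0]

lemma binRep_even (b : ℕ) (hb : b ≠ 0) : binRep (2 * b) = binRep b ++ [0] := by
  have h2b : 2 * b ≠ 0 := by omega
  rw [binRep, binRep, if_neg h2b, if_neg hb]
  rw [Nat.digits_def' (by norm_num : 1 < 2) (by omega : 0 < 2 * b)]
  simp [Nat.mul_div_cancel_left, Nat.mul_mod_right]

lemma binRep_odd (b : ℕ) (hb : b ≠ 0) : binRep (2 * b + 1) = binRep b ++ [1] := by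
  rw [binRep, binRep, if_neg (by omega : 2 * b + 1 ≠ 0), if_neg hb]
  rw [Nat.digits_def' (by norm_num : 1 < 2) (by omega : 0 < 2 * b + 1)]
  have : (2 * b + 1) / 2 = b := by omega
  have hm : (2 * b + 1) % 2 = 1 := by omega
  simp [this, hm]
  rfl

lemma val3_iter_zero (i : ℕ) :
    val3 (addTwo^[i] ([0] : List Digit)) = val3 (addTwo^[i] ([] : List Digit)) := by
  cases i with
  | zero => rfl
  | succ i =>
      rw [Function.iterate_succ_apply, Function.iterate_succ_apply]
      have : addTwo ([0] : List Digit) = addTwo [] := by rfl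
      rw [this]

/-- Zooming-out identities for the base-3 values of the grid entries. -/
theorem zooming_out (a b : ℕ) :
    val3 (G (3 * a) (2 * b)) = 3 * val3 (G (2 * a) b) ∧
    val3 (G (3 * a) (2 * b + 1)) = 3 * val3 (G (2 * a) b) + 1 ∧
    val3 (G (3 * a + 1) (2 * b)) = 3 * val3 (G (2 * a) b) + 2 ∧
    val3 (G (3 * a + 1) (2 * b + 1)) = 3 * val3 (G (2 * a + 1) b) ∧
    val3 (G (3 * a + 2) (2 * b)) = 3 * val3 (G (2 * a + 1) b) + 1 ∧
    val3 (G (3 * a + 2) (2 * b + 1)) = 3 * val3 (G (2 * a + 1) b) + 2 := by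
  by_cases hb : b = 0
  · subst hb
    have h0 : G 0 0 = ([] : List Digit) ++ [0] := rfl
    have h1 : G 0 1 = ([] : List Digit) ++ [1] := by simp [G, binRep]; rfl
    have e0 : ∀ i, val3 (G i 0) = val3 (addTwo^[i] ([] : List Digit)) := by
      intro i
      rw [G_eq_iterate]
      exact val3_iter_zero i
    refine ⟨?_, ?_, ?_, ?_, ?_, ?_⟩ <;>
      simp only [Nat.mul_zero, Nat.zero_add] <;>
      rw [G_eq_iterate, e0] <;>
      (first
        | rw [h0, iter0, val3_append]
        | rw [h1, iter1, val3_append]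
        | rw [h0, iter0', val3_append]
        | rw [h1, iter1', val3_append]
        | rw [h0, iter0'', val3_append]
        | rw [h1, iter1'', val3_append]) <;> rfl
  · have h0 : G 0 (2 * b) = G 0 b ++ [0] := binRep_even b hb
    have h1 : G 0 (2 * b + 1) = G 0 b ++ [1] := binRep_odd b hb
    refine ⟨?_, ?_, ?_, ?_, ?_, ?_⟩ <;>
      rw [G_eq_iterate, G_eq_iterate (j := b)] <;>
      (first
        | rw [h0, iter0, val3_append]
        | rw [h1, iter1, val3_append]
        | rw [h0, iter0', val3_append]
        | rw [h1, iter1', val3_append]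
        | rw [h0, iter0'', val3_append]
        | rw [h1, iter1'', val3_append]) <;> rfl
end

section
/- For every row i of the grid, the smallest base-3 value among the entries of that row occurs in the zeroth column: for all i and n, [G(i,0)]_3 ≤ [G(i,n)]_3. -/
lemma addTwo_append (w : List Digit) (d : Digit) :
    addTwo (w ++ [d]) = if d = 0 then w ++ [2] else addTwo w ++ [d + 2] := by
  unfold addTwo
  rw [List.reverse_append]
  simp only [List.reverse_singleton, List.singleton_append, addTwoAux]
  split
  · next h => subst h; simp
  · simp [List.reverse_cons]

/-- number of carries into the prefix after `i` applications of `addTwo`,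
when the last digit is `d`. -/
def cc : ℕ → Digit → ℕ
  | 0, _ => 0
  | i + 1, d => if d = 0 then cc i 2 else cc i (d + 2) + 1

/-- the last digit after `i` applications of `addTwo`. -/
def dig : ℕ → Digit → Digit
  | 0, d => d
  | i + 1, d => dig i (d + 2)

lemma iterate_append (i : ℕ) (w : List Digit) (d : Digit) :
    addTwo^[i] (w ++ [d]) = addTwo^[cc i d] w ++ [dig i d] := by
  induction i generalizing w d with
  | zero => simp [cc, dig]
  | succ i ih =>
    rw [Function.iterate_succ_apply, addTwo_append]
    by_cases hd : d = 0
    · subst hd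
      rw [if_pos rfl, ih]
      have h2 : ((0 : Digit) + 2) = 2 := by decide
      simp [cc, dig, h2]
    · rw [if_neg hd, ih, ← Function.iterate_succ_apply]
      simp [cc, dig, hd]

lemma val3_addTwo (w : List Digit) : val3 w + 2 ≤ val3 (addTwo w) := by
  induction w using List.reverseRecOn with
  | nil => decide
  | append_singleton w d ih =>
    rw [addTwo_append]
    by_cases hd : d = 0
    · subst hd; rw [if_pos rfl, val3_append, val3_append]; simp
    · rw [if_neg hd, val3_append, val3_append]
      have hv : (d + 2).val + 1 = d.val := by
        fin_cases d
        · exact absurd rfl hd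
        · decide
        · decide
      omega

def A (i : ℕ) : ℕ := val3 (addTwo^[i] [])

lemma A_step (i : ℕ) : A i + 2 ≤ A (i + 1) := by
  rw [A, A, Function.iterate_succ_apply']
  exact val3_addTwo _

lemma A_mono : Monotone A :=
  monotone_nat_of_le_succ fun i => le_trans (by omega) (A_step i)

lemma A_zeroCol (i : ℕ) : val3 (addTwo^[i] [(0 : Digit)]) = A i := by
  cases i with
  | zero => rfl
  | succ i =>
    have h : addTwo [(0 : Digit)] = addTwo ([] : List Digit) := by decide
    rw [Function.iterate_succ_apply, h, ← Function.iterate_succ_apply]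
    rfl

lemma A_eq (i : ℕ) : A i = 3 * A (cc i 0) + (dig i 0).val := by
  have := iterate_append i [] 0
  simp only [List.nil_append] at this
  rw [← A_zeroCol i, this, val3_append, A]

lemma cc_eq : ∀ (i : ℕ) (d : Digit), cc i d = i - (i + 2 - d.val) / 3 := by
  intro i
  induction i with
  | zero => intro d; simp [cc]
  | succ i ih =>
    intro d
    fin_cases d <;> simp [cc, ih] <;> omega

lemma dig_val : ∀ (i : ℕ) (d : Digit), (dig i d).val = (d.val + 2 * i) % 3 := by
  intro i
  induction i with
  | zero => intro d; have := d.isLt; simp [dig]; omega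
  | succ i ih =>
    intro d
    fin_cases d <;> simp [dig, ih] <;> omega

lemma key (i : ℕ) : A i ≤ 3 * A (cc i 1) + (dig i 1).val := by
  have hE := A_eq i
  have h0 := cc_eq i 0
  have h1 := cc_eq i 1
  have d0 := dig_val i 0
  have d1 := dig_val i 1
  simp only [Fin.val_zero, Fin.val_one] at h0 h1 d0 d1
  by_cases h : i % 3 = 1
  · have hk : cc i 1 = cc i 0 + 1 := by rw [h0, h1]; omega
    have hA := A_step (cc i 0)
    rw [← hk] at hA
    omega
  · have hA : A (cc i 0) ≤ A (cc i 1) := A_mono (by rw [h0, h1]; omega)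
    omega

lemma binRep_step (n : ℕ) (hn : 2 ≤ n) :
    binRep n = binRep (n / 2) ++ [(Fin.ofNat 3 (n % 2) : Digit)] := by
  have h1 : n ≠ 0 := by omega
  have h2 : n / 2 ≠ 0 := by omega
  rw [binRep, binRep, if_neg h1, if_neg h2]
  rw [Nat.digits_def' (by norm_num : 1 < 2) (by omega : 0 < n)]
  simp

lemma binRep_one : binRep 1 = [1] := by
  rw [binRep, if_neg one_ne_zero]
  rw [Nat.digits_def' (by norm_num : 1 < 2) (by norm_num : 0 < 1)]
  simp
  rfl

lemma main (n : ℕ) : ∀ i, A i ≤ val3 (addTwo^[i] (binRep n)) := by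
  induction n using Nat.strong_induction_on with
  | _ n ih =>
    intro i
    match n with
    | 0 =>
      have : binRep 0 = [(0 : Digit)] := by rw [binRep, if_pos rfl]
      rw [this, A_zeroCol]
    | 1 =>
      rw [binRep_one]
      have h := iterate_append i [] 1
      simp only [List.nil_append] at h
      rw [h, val3_append]
      exact le_trans (key i) (by rfl)
    | (m + 2) =>
      set n := m + 2 with hn
      have hn2 : 2 ≤ n := by omega
      have hlt : n / 2 < n := by omega
      rw [binRep_step n hn2, iterate_append, val3_append]
      have hmod : n % 2 = 0 ∨ n % 2 = 1 := by omega
      rcases hmod with h2 | h2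
      · rw [h2]
        have hc : (Fin.ofNat 3 0 : Digit) = 0 := rfl
        rw [hc]
        have hih := ih (n / 2) hlt (cc i 0)
        have hE := A_eq i
        omega
      · rw [h2]
        have hc : (Fin.ofNat 3 1 : Digit) = 1 := rfl
        rw [hc]
        have hih := ih (n / 2) hlt (cc i 1)
        have hk := key i
        omega

lemma G_eq (i n : ℕ) : G i n = addTwo^[i] (binRep n) := by
  induction i with
  | zero => rfl
  | succ i ih =>
    rw [G, ih]
    exact (Function.iterate_succ_apply' addTwo i (binRep n)).symm

/-- The smallest base-3 value in each row of the grid occurs in the zeroth column. -/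
theorem zeroth_column_min (i n : ℕ) : val3 (G i 0) ≤ val3 (G i n) := by
  rw [G_eq, G_eq]
  have h0 : binRep 0 = [(0 : Digit)] := by rw [binRep, if_pos rfl]
  rw [h0, A_zeroCol]
  exact main n i
end

section
/- For every natural number i, the set of base-3/2 values of the entries of row i of the grid is a 3-free set of rational numbers: there are no columns p, q, r with [G(i,p)]_{3/2} < [G(i,q)]_{3/2} < [G(i,r)]_{3/2} and [G(i,p)]_{3/2} + [G(i,r)]_{3/2} = 2·[G(i,q)]_{3/2}. -/
/-- Base-3/2 value of a digit string (most significant digit first):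
`[a_n ... a_1 a_0]_{3/2} = Σ a_i (3/2)^i`. -/
def val32 (w : List Digit) : ℚ := w.foldl (fun acc d => (3 / 2 : ℚ) * acc + d.val) 0

/-! ### Auxiliary definitions and lemmas -/

open Fin.NatCast

/-- Base-3/2 value, least significant digit first. -/
def vR : List Digit → ℚ
  | [] => 0
  | d :: l => d.val + (3/2) * vR l

lemma vR_append (l : List Digit) (d : Digit) :
    vR (l ++ [d]) = vR l + d.val * (3/2) ^ l.length := by
  induction l with
  | nil => simp [vR]
  | cons a l ih => simp [vR, ih, pow_succ]; ring

lemma foldl_val (w : List Digit) (acc : ℚ) :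
    w.foldl (fun acc d => (3 / 2 : ℚ) * acc + d.val) acc
      = (3/2) ^ w.length * acc + vR w.reverse := by
  induction w generalizing acc with
  | nil => simp [vR]
  | cons d w ih => simp [ih, vR_append, pow_succ]; ring

lemma val32_eq (w : List Digit) : val32 w = vR w.reverse := by
  simp [val32, foldl_val]

lemma vR_addTwoAux (l : List Digit) : vR (addTwoAux l) = vR l + 2 := by
  induction l with
  | nil => simp [addTwoAux, vR]
  | cons d l ih =>
    by_cases h : d = 0
    · subst h; simp [addTwoAux, vR]; ring
    · fin_cases d
      · simp at h
      · simp [addTwoAux, vR, ih]; ring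
      · simp [addTwoAux, vR, ih]; ring

lemma val32_addTwo (w : List Digit) : val32 (addTwo w) = val32 w + 2 := by
  rw [val32_eq, val32_eq, addTwo, List.reverse_reverse, vR_addTwoAux]

lemma val32_G (i j : ℕ) : val32 (G i j) = val32 (binRep j) + 2 * i := by
  induction i with
  | zero => simp [G]
  | succ i ih => show val32 (addTwo (G i j)) = _; rw [val32_addTwo, ih]; push_cast; ring

lemma keyInt : ∀ (n : ℕ) (a b : ℕ → ℕ), (∀ i, a i < 3) → (∀ i, b i < 3) →
    (∑ i ∈ Finset.range n, (a i : ℤ) * 3 ^ i * 2 ^ (n - i))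
      = ∑ i ∈ Finset.range n, (b i : ℤ) * 3 ^ i * 2 ^ (n - i) →
    ∀ i < n, a i = b i := by
  intro n
  induction n with
  | zero => intro a b _ _ _ i hi; omega
  | succ n ih =>
    intro a b ha hb heq i hi
    have hpeel : ∀ c : ℕ → ℕ,
        (∑ i ∈ Finset.range (n+1), (c i : ℤ) * 3 ^ i * 2 ^ (n + 1 - i))
        = 3 * (∑ i ∈ Finset.range n, (c (i+1) : ℤ) * 3 ^ i * 2 ^ (n - i)) + (c 0 : ℤ) * 2 ^ (n+1) := by
      intro c
      rw [Finset.sum_range_succ', Finset.mul_sum]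
      congr 1
      · apply Finset.sum_congr rfl
        intro j hj
        simp only [Finset.mem_range] at hj
        have : n + 1 - (j + 1) = n - j := by omega
        rw [this]; ring
      · simp [pow_succ]
    rw [hpeel a, hpeel b] at heq
    have h3 : (3 : ℤ) ∣ ((a 0 : ℤ) - b 0) * 2 ^ (n+1) := by
      have : ((a 0 : ℤ) - b 0) * 2 ^ (n+1) =
          3 * ((∑ i ∈ Finset.range n, (b (i+1) : ℤ) * 3 ^ i * 2 ^ (n - i))
             - ∑ i ∈ Finset.range n, (a (i+1) : ℤ) * 3 ^ i * 2 ^ (n - i)) := by linarith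
      exact ⟨_, this⟩
    have h3' : (3 : ℤ) ∣ ((a 0 : ℤ) - b 0) := by
      rcases (Int.prime_three.dvd_mul.mp h3) with h | h
      · exact h
      · exfalso
        have h2 := Int.prime_three.dvd_of_dvd_pow h
        omega
    have h0 : a 0 = b 0 := by
      have := ha 0; have := hb 0
      omega
    have heq' : (∑ i ∈ Finset.range n, (a (i+1) : ℤ) * 3 ^ i * 2 ^ (n - i))
        = ∑ i ∈ Finset.range n, (b (i+1) : ℤ) * 3 ^ i * 2 ^ (n - i) := by
      rw [h0] at heq; linarith
    rcases i with _ | j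
    · exact h0
    · exact ih (fun k => a (k+1)) (fun k => b (k+1)) (fun k => ha _) (fun k => hb _) heq' j (by omega)

lemma bridge (n : ℕ) (a : ℕ → ℕ) :
    ((∑ i ∈ Finset.range n, (a i : ℤ) * 3 ^ i * 2 ^ (n - i) : ℤ) : ℚ)
      = 2 ^ n * ∑ i ∈ Finset.range n, (a i : ℚ) * (3/2) ^ i := by
  push_cast
  rw [Finset.mul_sum]
  apply Finset.sum_congr rfl
  intro j hj
  simp only [Finset.mem_range] at hj
  have h2 : (2:ℚ) ^ (n - j) = 2 ^ n / 2 ^ j := by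
    rw [eq_div_iff (by positivity), ← pow_add]
    congr 1; omega
  rw [h2, div_pow]
  field_simp

lemma coeM_eq (l : List ℕ) :
    (List.map (fun d => d) (do let a ← l; pure ((a : ℕ) : Digit)) : List Digit)
      = l.map (Nat.cast : ℕ → Digit) := by
  induction l with
  | nil => rfl
  | cons a l ih => simp_all [List.flatMap_cons]

lemma binRep_eq (j : ℕ) (h : j ≠ 0) :
    binRep j = ((Nat.digits 2 j).map (Nat.cast : ℕ → Digit)).reverse := by
  rw [binRep, if_neg h]
  rw [show ((Nat.digits 2 j).reverse.map (fun (d : ℕ) => (Fin.ofNat 3 d : Digit))) =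
    List.map (fun d => d) (do let a ← (Nat.digits 2 j).reverse; pure ((a : ℕ) : Digit)) from (by rw [coeM_eq]; rfl)]
  rw [coeM_eq, List.map_reverse]

lemma vR_map (l : List ℕ) (hl : ∀ x ∈ l, x < 3) :
    ∀ n, l.length ≤ n →
    vR (l.map (Nat.cast : ℕ → Digit)) = ∑ i ∈ Finset.range n, (l.getD i 0 : ℚ) * (3/2) ^ i := by
  induction l with
  | nil => intro n _; simp [vR]
  | cons a l ih =>
    intro n hn
    obtain ⟨m, rfl⟩ : ∃ m, n = m + 1 := ⟨n - 1, by simp at hn; omega⟩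
    have ha : a < 3 := hl a (by simp)
    have hval : ((a : Digit)).val = a := by
      simp [Fin.val_natCast, Nat.mod_eq_of_lt ha]
    rw [Finset.sum_range_succ']
    simp only [List.getD_cons_succ, List.getD_cons_zero, pow_zero, mul_one, pow_succ]
    rw [List.map_cons]
    show (↑(a : Digit).val : ℚ) + (3/2) * vR (l.map _) = _
    rw [hval, ih (fun x hx => hl x (by simp [hx])) m (by simpa using hn)]
    rw [Finset.mul_sum, add_comm]
    congr 1
    apply Finset.sum_congr rfl
    intro j _
    ring

lemma getD_digits_lt (b j i : ℕ) (hb : 1 < b) : (Nat.digits b j).getD i 0 < b := by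
  by_cases h : i < (Nat.digits b j).length
  · rw [List.getD_eq_getElem _ _ h]
    exact Nat.digits_lt_base hb (List.getElem_mem h)
  · rw [List.getD_eq_default _ _ (by omega)]
    omega

lemma val32_binRep (j n : ℕ) (hn : (Nat.digits 2 j).length ≤ n) :
    val32 (binRep j) = ∑ i ∈ Finset.range n, ((Nat.digits 2 j).getD i 0 : ℚ) * (3/2) ^ i := by
  by_cases h : j = 0
  · subst h
    simp [binRep, val32_eq, vR]
  · rw [binRep_eq j h, val32_eq, List.reverse_reverse]
    exact vR_map _ (fun x hx => by have := Nat.digits_lt_base (by norm_num) hx; omega) n hn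

/-- Each row of the grid, evaluated in base 3/2, is a 3-free set of rational numbers. -/
theorem row_three_free (i : ℕ) :
    ¬ ∃ p q r : ℕ,
      val32 (G i p) < val32 (G i q) ∧ val32 (G i q) < val32 (G i r) ∧
      val32 (G i p) + val32 (G i r) = 2 * val32 (G i q) := by
  rintro ⟨p, q, r, h1, h2, h3⟩
  simp only [val32_G] at h1 h2 h3
  set n := (Nat.digits 2 p).length + (Nat.digits 2 q).length + (Nat.digits 2 r).length with hn
  have hvp := val32_binRep p n (by omega)
  have hvq := val32_binRep q n (by omega)
  have hvr := val32_binRep r n (by omega)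
  set a : ℕ → ℕ := fun k => (Nat.digits 2 p).getD k 0 + (Nat.digits 2 r).getD k 0 with ha
  set b : ℕ → ℕ := fun k => 2 * (Nat.digits 2 q).getD k 0 with hb
  have hQ : (∑ k ∈ Finset.range n, (a k : ℚ) * (3/2) ^ k)
      = ∑ k ∈ Finset.range n, (b k : ℚ) * (3/2) ^ k := by
    have hsum : ∀ k ∈ Finset.range n, (a k : ℚ) * (3/2) ^ k
        = ((Nat.digits 2 p).getD k 0 : ℚ) * (3/2) ^ k
          + ((Nat.digits 2 r).getD k 0 : ℚ) * (3/2) ^ k := by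
      intro k _; rw [ha]; push_cast; ring
    have hsum' : ∀ k ∈ Finset.range n, (b k : ℚ) * (3/2) ^ k
        = 2 * (((Nat.digits 2 q).getD k 0 : ℚ) * (3/2) ^ k) := by
      intro k _; rw [hb]; push_cast; ring
    rw [Finset.sum_congr rfl hsum, Finset.sum_congr rfl hsum',
      Finset.sum_add_distrib, ← Finset.mul_sum, ← hvp, ← hvr, ← hvq]
    linarith
  have hZ : (∑ k ∈ Finset.range n, (a k : ℤ) * 3 ^ k * 2 ^ (n - k))
      = ∑ k ∈ Finset.range n, (b k : ℤ) * 3 ^ k * 2 ^ (n - k) := by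
    have : ((∑ k ∈ Finset.range n, (a k : ℤ) * 3 ^ k * 2 ^ (n - k) : ℤ) : ℚ)
        = ((∑ k ∈ Finset.range n, (b k : ℤ) * 3 ^ k * 2 ^ (n - k) : ℤ) : ℚ) := by
      rw [bridge, bridge, hQ]
    exact_mod_cast this
  have hab := keyInt n a b
    (fun k => by have h1 := getD_digits_lt 2 p k one_lt_two
                 have h2 := getD_digits_lt 2 r k one_lt_two
                 simp only [ha]; omega)
    (fun k => by have := getD_digits_lt 2 q k one_lt_two
                 simp only [hb]; omega) hZ
  have hpr : val32 (binRep p) = val32 (binRep r) := by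
    rw [hvp, hvr]
    apply Finset.sum_congr rfl
    intro k hk
    have h := hab k (Finset.mem_range.mp hk)
    have h1 := getD_digits_lt 2 p k one_lt_two
    have h2 := getD_digits_lt 2 q k one_lt_two
    have h3 := getD_digits_lt 2 r k one_lt_two
    simp only [ha, hb] at h
    have : (Nat.digits 2 p).getD k 0 = (Nat.digits 2 r).getD k 0 := by omega
    rw [this]
  linarith
end
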